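/- Let g ∈ G_n and h ∈ G_k, and let θ ∈ K_{n+k} be any element whose underlying permutation of ℕ sends i to n + i for all 0 ≤ i < k. Then: (a) the element g · θ h θ⁻¹ lies in G_{n+k}, and its K_{n+k}-conjugacy class does not depend on the choice of θ; and (b) for every N ∈ ℕ, the difference A_N[n,g] * A_N[k,h] − A_N[n+k, g · θ h θ⁻¹] lies in the complex linear span of the elements A_N[m,r] with m ≤ n + k − 1 and r ∈ G_m. -/

import Mathlib

noncomputable section

/-- Embedding of permutations of `ℕ` into permutations of `V = X ⊕ (I × ℕ)`,
acting trivially on `X` and on the first factor of `I × ℕ`.  It restricts to an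
embedding of `S_∞` into `S(V)`. -/
def embNat (I X : Type*) (τ : Equiv.Perm ℕ) : Equiv.Perm (X ⊕ I × ℕ) :=
  Equiv.sumCongr (Equiv.refl X) (Equiv.prodCongr (Equiv.refl I) τ)

/-- `τ` fixes every `m ≥ n`, i.e. `τ` belongs to the subgroup `S_n ≤ S_∞`. -/
def fixesFrom (n : ℕ) (τ : Equiv.Perm ℕ) : Prop := ∀ m : ℕ, n ≤ m → τ m = m

/-- `G_n`: the set of elements of `G_∞` fixing every point of `V ∖ V_n`. -/
def Gset {I X : Type*} (Ginf : Subgroup (Equiv.Perm (X ⊕ I × ℕ))) (n : ℕ) :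
    Set (Equiv.Perm (X ⊕ I × ℕ)) :=
  {g | g ∈ Ginf ∧ ∀ (i : I) (m : ℕ), n ≤ m → g (Sum.inr (i, m)) = Sum.inr (i, m)}

/-- `K_n`-conjugacy of elements of `S(V)`:  `g' = κ g κ⁻¹` for some `κ ∈ K_n`,
where `K_n` is the image of `S_n` in `S(V)`. -/
def Kconj {I X : Type*} (n : ℕ) (g g' : Equiv.Perm (X ⊕ I × ℕ)) : Prop :=
  ∃ τ : Equiv.Perm ℕ, fixesFrom n τ ∧ g' = embNat I X τ * g * (embNat I X τ)⁻¹

/-- A permutation of `Fin N` extended to `ℕ` and then to `V`; these elements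
form exactly the subgroup `K_N ≤ S(V)`. -/
def embFin (I X : Type*) (N : ℕ) (σ : Equiv.Perm (Fin N)) : Equiv.Perm (X ⊕ I × ℕ) :=
  embNat I X (σ.extendDomain Fin.equivSubtype)

/-- The element `A_N[j,g] = (1/(N−j)!) Σ_{τ ∈ K_N} τ g τ⁻¹` of `ℂ[G_∞]`
(and `A_N[j,g] = 0` for `j > N`). -/
def AN (I X : Type*) (N j : ℕ) (g : Equiv.Perm (X ⊕ I × ℕ)) :
    MonoidAlgebra ℂ (Equiv.Perm (X ⊕ I × ℕ)) :=
  if j ≤ N then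
    ((Nat.factorial (N - j) : ℂ))⁻¹ •
      ∑ σ : Equiv.Perm (Fin N),
        MonoidAlgebra.of ℂ (Equiv.Perm (X ⊕ I × ℕ))
          (embFin I X N σ * g * (embFin I X N σ)⁻¹)
  else 0


section Helpers
theorem perm_apply_inv_self {α : Type*} (f : Equiv.Perm α) (x : α) : f (f⁻¹ x) = x :=
  (Equiv.eq_symm_apply f).mp rfl
theorem perm_inv_apply_self {α : Type*} (f : Equiv.Perm α) (x : α) : f⁻¹ (f x) = x :=
  Equiv.Perm.inv_eq_iff_eq.mpr rfl

open Equiv Equiv.Perm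
variable {I X : Type*}

lemma embNat_inl (τ : Perm ℕ) (x : X) : embNat I X τ (Sum.inl x) = Sum.inl x := rfl
lemma embNat_inr (τ : Perm ℕ) (i : I) (m : ℕ) :
    embNat I X τ (Sum.inr (i, m)) = Sum.inr (i, τ m) := rfl

lemma embNat_mul (σ τ : Perm ℕ) : embNat I X (σ * τ) = embNat I X σ * embNat I X τ := by
  ext v; rcases v with x | ⟨i, m⟩ <;> rfl

lemma embNat_one : embNat I X 1 = 1 := by
  ext v; rcases v with x | ⟨i, m⟩ <;> rfl

lemma embNat_inv (τ : Perm ℕ) : embNat I X τ⁻¹ = (embNat I X τ)⁻¹ := by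
  rw [eq_inv_iff_mul_eq_one, ← embNat_mul, inv_mul_cancel, embNat_one]

/-- Key conjugation lemma: if `h` fixes all `(i,m)` with `m ≥ k` and `ρ` fixes all
`j < k` pointwise, then conjugating `h` by `embNat ρ` does nothing. -/
lemma conj_fix {k : ℕ} {h : Perm (X ⊕ I × ℕ)}
    (hh : ∀ (i : I) (m : ℕ), k ≤ m → h (Sum.inr (i, m)) = Sum.inr (i, m))
    {ρ : Perm ℕ} (hρ : ∀ j, j < k → ρ j = j) :
    embNat I X ρ * h * (embNat I X ρ)⁻¹ = h := by
  have hρinv : ∀ j, j < k → ρ⁻¹ j = j := by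
    intro j hj
    have := hρ j hj
    exact (Equiv.symm_apply_eq ρ).mpr this.symm
  have hge : ∀ m, k ≤ m → k ≤ ρ⁻¹ m := by
    intro m hm
    by_contra hc
    push_neg at hc
    have := hρ _ hc
    rw [perm_apply_inv_self] at this
    omega
  have hlow : ∀ w : X ⊕ I × ℕ, (∀ (i : I) (m : ℕ), k ≤ m → w ≠ Sum.inr (i, m)) →
      embNat I X ρ w = w := by
    intro w hw
    rcases w with x | ⟨i, m⟩
    · rfl
    · rcases lt_or_ge m k with hm | hm
      · rw [embNat_inr, hρ m hm]
      · exact absurd rfl (hw i m hm)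
  have hval : ∀ (v : X ⊕ I × ℕ) (i : I) (m : ℕ), k ≤ m → h v = Sum.inr (i, m) →
      v = Sum.inr (i, m) := by
    intro v i m hm hv
    apply h.injective
    rw [hv, hh i m hm]
  ext v
  rw [← embNat_inv]
  show embNat I X ρ (h (embNat I X ρ⁻¹ v)) = h v
  rcases v with x | ⟨i, m⟩
  · rw [embNat_inl]
    apply hlow
    intro i m hm hv
    have := hval _ i m hm hv
    exact absurd this (by simp)
  · rcases lt_or_ge m k with hm | hm
    · rw [embNat_inr, hρinv m hm]
      apply hlow
      intro i' m' hm' hv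
      have h2 := hval _ i' m' hm' hv
      injection h2 with h3
      injection h3 with h4 h5
      omega
    · rw [embNat_inr, hh i _ (hge m hm), embNat_inr, perm_apply_inv_self,
        hh i m hm]

end Helpers

section Helpers2
open Equiv Equiv.Perm
variable {I X : Type*}

lemma extendFin_lt {N : ℕ} (σ : Perm (Fin N)) (m : ℕ) (hm : m < N) :
    σ.extendDomain Fin.equivSubtype m = (σ ⟨m, hm⟩ : Fin N).val := by
  rw [Equiv.Perm.extendDomain_apply_subtype σ Fin.equivSubtype hm]
  rfl

lemma extendFin_ge {N : ℕ} (σ : Perm (Fin N)) (m : ℕ) (hm : ¬ m < N) :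
    σ.extendDomain Fin.equivSubtype m = m :=
  Equiv.Perm.extendDomain_apply_not_subtype σ Fin.equivSubtype hm

lemma embFin_mul {N : ℕ} (σ τ : Perm (Fin N)) :
    embFin I X N (σ * τ) = embFin I X N σ * embFin I X N τ := by
  unfold embFin
  rw [← Equiv.Perm.extendDomain_mul, embNat_mul]

lemma embFin_inv {N : ℕ} (σ : Perm (Fin N)) :
    embFin I X N σ⁻¹ = (embFin I X N σ)⁻¹ := by
  unfold embFin
  rw [← Equiv.Perm.extendDomain_inv, embNat_inv]

/-- Every finitely supported permutation of `ℕ` fixing `[N,∞)` comes from `Perm (Fin N)`. -/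
lemma exists_finPerm {N : ℕ} (τ : Perm ℕ) (hτ : fixesFrom N τ) :
    ∃ σ : Perm (Fin N), σ.extendDomain Fin.equivSubtype = τ := by
  have hiff : ∀ m, m < N ↔ τ m < N := by
    intro m
    constructor
    · intro hm
      by_contra hc
      push_neg at hc
      have h1 := hτ _ hc
      have := τ.injective h1
      omega
    · intro hm
      by_contra hc
      push_neg at hc
      rw [hτ m hc] at hm
      omega
  refine ⟨Fin.equivSubtype.symm.permCongr (τ.subtypePerm (fun m => (hiff m).symm)), ?_⟩
  ext m
  by_cases hm : m < N
  · rw [extendFin_lt _ m hm]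
    simp [Equiv.permCongr_apply, Equiv.Perm.subtypePerm_apply, Fin.equivSubtype]
  · rw [extendFin_ge _ m hm, hτ m (le_of_not_gt hm)]

/-- Any two embeddings of a fintype into a fintype are related by a permutation. -/
lemma exists_perm_map {α β : Type*} [Fintype α] [Fintype β] [DecidableEq β]
    (u v : α ↪ β) : ∃ ρ : Perm β, ∀ j, ρ (u j) = v j := by
  classical
  let e₁ : α ≃ Set.range u := Equiv.ofInjective u u.injective
  let e₂ : α ≃ Set.range v := Equiv.ofInjective v v.injective
  have hc : Fintype.card (↥(Set.range ⇑u)ᶜ) = Fintype.card (↥(Set.range ⇑v)ᶜ) := by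
    rw [Fintype.card_compl_set, Fintype.card_compl_set,
      Fintype.card_congr e₁.symm, Fintype.card_congr e₂.symm]
  let c : (↥(Set.range ⇑u)ᶜ) ≃ (↥(Set.range ⇑v)ᶜ) := Fintype.equivOfCardEq hc
  refine ⟨(Equiv.Set.sumCompl (Set.range ⇑u)).symm.trans
    (((e₁.symm.trans e₂).sumCongr c).trans (Equiv.Set.sumCompl (Set.range ⇑v))), ?_⟩
  intro j
  have hm : u j ∈ Set.range ⇑u := ⟨j, rfl⟩
  simp only [Equiv.trans_apply, Equiv.Set.sumCompl_symm_apply_of_mem hm,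
    Equiv.sumCongr_apply, Sum.map_inl, Equiv.Set.sumCompl_apply_inl]
  have : e₁.symm ⟨u j, hm⟩ = j := by
    apply e₁.injective
    simp [e₁]
  rw [this]
  rfl

end Helpers2

section Helpers3
open Equiv Equiv.Perm
variable {I X : Type*}

/-- ℕ-gadget: a permutation of ℕ fixing `[0,n)` and `[N,∞)` pointwise and
mapping `u j ↦ v j` for injective families inside `[n,N)`. -/
lemma exists_natPerm {n N d : ℕ} (u v : Fin d → ℕ)
    (hu : Function.Injective u) (hv : Function.Injective v)
    (hur : ∀ j, n ≤ u j ∧ u j < N) (hvr : ∀ j, n ≤ v j ∧ v j < N) :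
    ∃ μ : Perm ℕ, (∀ m, m < n → μ m = m) ∧ fixesFrom N μ ∧ (∀ j, μ (u j) = v j) := by
  classical
  set p : ℕ → Prop := fun m => n ≤ m ∧ m < N with hp
  haveI : DecidablePred p := fun m => instDecidableAnd
  haveI : Fintype (Subtype p) :=
    Fintype.ofFinset (Finset.Ico n N) (fun x => by rw [Finset.mem_Ico]; exact Iff.rfl)
  let u' : Fin d ↪ Subtype p := ⟨fun j => ⟨u j, hur j⟩, by
    intro a b hab
    exact hu (congrArg Subtype.val hab)⟩
  let v' : Fin d ↪ Subtype p := ⟨fun j => ⟨v j, hvr j⟩, by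
    intro a b hab
    exact hv (congrArg Subtype.val hab)⟩
  obtain ⟨ρ, hρ⟩ := exists_perm_map u' v'
  refine ⟨ρ.extendDomain (Equiv.refl (Subtype p)), ?_, ?_, ?_⟩
  · intro m hm
    exact Equiv.Perm.extendDomain_apply_not_subtype ρ _ (by simp [hp]; omega)
  · intro m hm
    exact Equiv.Perm.extendDomain_apply_not_subtype ρ _ (by simp [hp]; omega)
  · intro j
    have hpj : p (u j) := hur j
    rw [Equiv.Perm.extendDomain_apply_subtype ρ _ hpj]
    have : ρ ⟨u j, hpj⟩ = v' j := hρ j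
    simp only [Equiv.refl_symm, Equiv.refl_apply, this]
    rfl

/-- Every injection `Fin k ↪ Fin N` extends to a permutation of `Fin N`. -/
lemma exists_ext {k N : ℕ} (hk : k ≤ N) (ι : Fin k ↪ Fin N) :
    ∃ π : Perm (Fin N), ∀ i : Fin k, π (Fin.castLE hk i) = ι i := by
  classical
  exact exists_perm_map (Fin.castLEEmb hk) ι


end Helpers3

section Helpers4
open Equiv Equiv.Perm Finset
variable {I X : Type*}

def Sc (I X : Type*) (N : ℕ) (r : Equiv.Perm (X ⊕ I × ℕ)) :
    MonoidAlgebra ℂ (Equiv.Perm (X ⊕ I × ℕ)) :=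
  ∑ σ : Equiv.Perm (Fin N), MonoidAlgebra.of ℂ (Equiv.Perm (X ⊕ I × ℕ))
      (embFin I X N σ * r * (embFin I X N σ)⁻¹)

lemma AN_eq (N j : ℕ) (r : Equiv.Perm (X ⊕ I × ℕ)) (hj : j ≤ N) :
    AN I X N j r = ((Nat.factorial (N - j) : ℂ))⁻¹ • Sc I X N r := by
  rw [AN, if_pos hj]; rfl

lemma AN_eq_zero (N j : ℕ) (r : Equiv.Perm (X ⊕ I × ℕ)) (hj : ¬ j ≤ N) :
    AN I X N j r = 0 := by
  rw [AN, if_neg hj]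

lemma Sc_eq_smul_AN (N j : ℕ) (r : Equiv.Perm (X ⊕ I × ℕ)) (hj : j ≤ N) :
    Sc I X N r = ((Nat.factorial (N - j) : ℂ)) • AN I X N j r := by
  rw [AN_eq N j r hj, smul_smul, mul_inv_cancel₀ (by exact_mod_cast Nat.factorial_ne_zero _),
    one_smul]

lemma Sc_conj (N : ℕ) (r : Equiv.Perm (X ⊕ I × ℕ)) (κ : Perm (Fin N)) :
    Sc I X N (embFin I X N κ * r * (embFin I X N κ)⁻¹) = Sc I X N r := by
  unfold Sc
  rw [← Equiv.sum_comp (Equiv.mulRight κ)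
    (fun σ => MonoidAlgebra.of ℂ (Equiv.Perm (X ⊕ I × ℕ))
      (embFin I X N σ * r * (embFin I X N σ)⁻¹))]
  apply Finset.sum_congr rfl
  intro σ _
  congr 1
  show embFin I X N σ * (embFin I X N κ * r * (embFin I X N κ)⁻¹) * (embFin I X N σ)⁻¹
    = embFin I X N (σ * κ) * r * (embFin I X N (σ * κ))⁻¹
  rw [embFin_mul, mul_inv_rev]
  group

lemma Sc_conj_nat (N : ℕ) (r : Equiv.Perm (X ⊕ I × ℕ)) (μ : Equiv.Perm ℕ)
    (hμ : fixesFrom N μ) :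
    Sc I X N (embNat I X μ * r * (embNat I X μ)⁻¹) = Sc I X N r := by
  obtain ⟨κ, hκ⟩ := exists_finPerm μ hμ
  have : embNat I X μ = embFin I X N κ := by rw [embFin, hκ]
  rw [this, Sc_conj]

/-- cardinality of `{a : Fin N // k ≤ a.val}` -/
lemma card_subtype_ge (N k : ℕ) : Fintype.card {a : Fin N // k ≤ a.val} = N - k := by
  have e : {a : Fin N // k ≤ a.val} ≃ Fin (N - k) :=
    { toFun := fun a => ⟨a.1.val - k, by have := a.1.isLt; have := a.2; omega⟩
      invFun := fun b => ⟨⟨k + b.val, by have := b.isLt; omega⟩, by simp⟩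
      left_inv := fun a => by
        apply Subtype.ext; apply Fin.ext; simp
        have := a.2; omega
      right_inv := fun b => by apply Fin.ext; simp }
  rw [Fintype.card_congr e, Fintype.card_fin]

lemma card_fix (N k : ℕ) :
    (Finset.univ.filter (fun ρ : Perm (Fin N) => ∀ a : Fin N, a.val < k → ρ a = a)).card
      = (N - k).factorial := by
  classical
  rw [← Fintype.card_subtype]
  have e1 : {f : Perm (Fin N) // ∀ a : Fin N, a.val < k → f a = a} ≃
      {f : Perm (Fin N) // ∀ a : Fin N, ¬ (fun a : Fin N => k ≤ a.val) a → f a = a} :=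
    Equiv.subtypeEquivRight (fun f => by
      constructor <;> (intro hf a ha; exact hf a (by simp at ha ⊢; omega)))
  rw [Fintype.card_congr e1,
    Fintype.card_congr (Equiv.Perm.subtypeEquivSubtypePerm (fun a : Fin N => k ≤ a.val)).symm,
    Fintype.card_perm, card_subtype_ge]

def resEmb {k N : ℕ} (hk : k ≤ N) (π : Perm (Fin N)) : Fin k ↪ Fin N :=
  (Fin.castLEEmb hk).trans π.toEmbedding

lemma resEmb_apply {k N : ℕ} (hk : k ≤ N) (π : Perm (Fin N)) (i : Fin k) :
    resEmb hk π i = π (Fin.castLE hk i) := rfl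

lemma card_fiber {k N : ℕ} (hk : k ≤ N) (ι : Fin k ↪ Fin N) :
    (Finset.univ.filter (fun π : Perm (Fin N) => resEmb hk π = ι)).card
      = (N - k).factorial := by
  classical
  obtain ⟨π₀, hπ₀⟩ := exists_ext hk ι
  rw [← card_fix N k]
  apply Finset.card_bij' (fun π _ => π₀⁻¹ * π) (fun ρ _ => π₀ * ρ)
  · intro π hπ
    simp only [Finset.mem_filter, Finset.mem_univ, true_and] at hπ ⊢
    intro a ha
    have h1 : π a = ι ⟨a.val, ha⟩ := DFunLike.congr_fun hπ ⟨a.val, ha⟩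
    have h2 : π₀ a = ι ⟨a.val, ha⟩ := hπ₀ ⟨a.val, ha⟩
    rw [Equiv.Perm.mul_apply, h1, ← h2, perm_inv_apply_self]
  · intro ρ hρ
    simp only [Finset.mem_filter, Finset.mem_univ, true_and] at hρ ⊢
    apply DFunLike.ext
    intro i
    show (π₀ * ρ) (Fin.castLE hk i) = ι i
    rw [Equiv.Perm.mul_apply, hρ _ i.isLt, hπ₀]
  · intro π _; group
  · intro ρ _; group

lemma card_top (n k N : ℕ) :
    (Finset.univ.filter (fun ι : Fin k ↪ Fin N => ∀ i, n ≤ (ι i).val)).card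
      = (N - n).descFactorial k := by
  classical
  rw [← Fintype.card_subtype]
  have e : {ι : Fin k ↪ Fin N // ∀ i, n ≤ (ι i).val} ≃ (Fin k ↪ {a : Fin N // n ≤ a.val}) :=
    { toFun := fun ι => ⟨fun i => ⟨ι.1 i, ι.2 i⟩, fun a b hab => ι.1.injective
        (congrArg Subtype.val hab)⟩
      invFun := fun ι' => ⟨ι'.trans (Function.Embedding.subtype _), fun i => (ι' i).2⟩
      left_inv := fun ι => by apply Subtype.ext; apply DFunLike.ext; intro i; rfl
      right_inv := fun ι' => by apply DFunLike.ext; intro i; apply Subtype.ext; rfl }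
  rw [Fintype.card_congr e, Fintype.card_embedding_eq, Fintype.card_fin, card_subtype_ge]

end Helpers4

section Main
open Equiv Equiv.Perm Finset
variable {I X : Type*}

lemma conj_congr {G : Type*} [Group G] {x : G} (a b : G)
    (hab : (b⁻¹ * a) * x * (b⁻¹ * a)⁻¹ = x) :
    a * x * a⁻¹ = b * x * b⁻¹ := by
  have h3 := congrArg (fun z => b * z * b⁻¹) hab
  rw [← h3]
  group

lemma embNat_mem (Ginf : Subgroup (Equiv.Perm (X ⊕ I × ℕ)))
    (hGS : ∀ τ : Equiv.Perm ℕ, {m : ℕ | τ m ≠ m}.Finite → embNat I X τ ∈ Ginf)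
    {N : ℕ} {τ : Perm ℕ} (hτ : fixesFrom N τ) : embNat I X τ ∈ Ginf := by
  apply hGS
  apply Set.Finite.subset (Set.finite_Iio N)
  intro m hm
  simp only [Set.mem_setOf_eq] at hm
  by_contra hc
  simp only [Set.mem_Iio, not_lt] at hc
  exact hm (hτ m hc)

lemma partA_mem (Ginf : Subgroup (Equiv.Perm (X ⊕ I × ℕ)))
    (hGS : ∀ τ : Equiv.Perm ℕ, {m : ℕ | τ m ≠ m}.Finite → embNat I X τ ∈ Ginf)
    (n k : ℕ) (g h : Equiv.Perm (X ⊕ I × ℕ))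
    (hg : g ∈ Gset Ginf n) (hh : h ∈ Gset Ginf k)
    (θ : Perm ℕ) (hθf : fixesFrom (n + k) θ) (hθ : ∀ i : ℕ, i < k → θ i = n + i) :
    g * (embNat I X θ * h * (embNat I X θ)⁻¹) ∈ Gset Ginf (n + k) := by
  have hθG : embNat I X θ ∈ Ginf := embNat_mem Ginf hGS hθf
  refine ⟨mul_mem hg.1 (mul_mem (mul_mem hθG hh.1) (inv_mem hθG)), ?_⟩
  intro i m hm
  show g ((embNat I X θ) (h ((embNat I X θ)⁻¹ (Sum.inr (i, m))))) = Sum.inr (i, m)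
  rw [← embNat_inv, embNat_inr]
  have h1 : k ≤ θ⁻¹ m := by
    by_contra hc
    push_neg at hc
    have h2 := hθ _ hc
    rw [perm_apply_inv_self] at h2
    omega
  rw [hh.2 i _ h1, embNat_inr, perm_apply_inv_self, hg.2 i m (by omega)]

lemma theta_indep {k : ℕ} (n : ℕ) (h : Equiv.Perm (X ⊕ I × ℕ))
    (hh2 : ∀ (i : I) (m : ℕ), k ≤ m → h (Sum.inr (i, m)) = Sum.inr (i, m))
    (θ θ' : Perm ℕ) (hθ : ∀ i : ℕ, i < k → θ i = n + i) (hθ' : ∀ i : ℕ, i < k → θ' i = n + i) :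
    embNat I X θ * h * (embNat I X θ)⁻¹ = embNat I X θ' * h * (embNat I X θ')⁻¹ := by
  apply conj_congr
  have hfix : ∀ j, j < k → (θ'⁻¹ * θ) j = j := by
    intro j hj
    show θ'⁻¹ (θ j) = j
    rw [hθ j hj, ← hθ' j hj, perm_inv_apply_self]
  have hc := conj_fix hh2 hfix
  rw [embNat_mul, embNat_inv] at hc
  exact hc

lemma q_eq {k N : ℕ} (hk : k ≤ N) (h : Equiv.Perm (X ⊕ I × ℕ))
    (hh2 : ∀ (i : I) (m : ℕ), k ≤ m → h (Sum.inr (i, m)) = Sum.inr (i, m))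
    (π π' : Perm (Fin N)) (hagree : ∀ i : Fin k, π (Fin.castLE hk i) = π' (Fin.castLE hk i)) :
    embFin I X N π * h * (embFin I X N π)⁻¹ = embFin I X N π' * h * (embFin I X N π')⁻¹ := by
  apply conj_congr
  have hfix : ∀ j, j < k → (π'⁻¹ * π).extendDomain Fin.equivSubtype j = j := by
    intro j hj
    have hjN : j < N := lt_of_lt_of_le hj hk
    rw [extendFin_lt _ j hjN]
    show ((π'⁻¹ (π ⟨j, hjN⟩)) : Fin N).val = j
    have heq : π ⟨j, hjN⟩ = π' ⟨j, hjN⟩ := hagree ⟨j, hj⟩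
    rw [heq, perm_inv_apply_self]
  have hc := conj_fix hh2 hfix
  have hc' : embFin I X N (π'⁻¹ * π) * h * (embFin I X N (π'⁻¹ * π))⁻¹ = h := hc
  rw [embFin_mul, embFin_inv] at hc'
  exact hc'

end Main

section MainB
open Equiv Equiv.Perm Finset
variable {I X : Type*}

lemma partB (Ginf : Subgroup (Equiv.Perm (X ⊕ I × ℕ)))
    (hGS : ∀ τ : Equiv.Perm ℕ, {m : ℕ | τ m ≠ m}.Finite → embNat I X τ ∈ Ginf)
    (n k : ℕ) (g h : Equiv.Perm (X ⊕ I × ℕ))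
    (hg : g ∈ Gset Ginf n) (hh : h ∈ Gset Ginf k)
    (N : ℕ) (θ : Equiv.Perm ℕ) (hθf : fixesFrom (n + k) θ)
    (hθ : ∀ i : ℕ, i < k → θ i = n + i) :
    AN I X N n g * AN I X N k h
        - AN I X N (n + k) (g * (embNat I X θ * h * (embNat I X θ)⁻¹))
      ∈ Submodule.span ℂ
          {x : MonoidAlgebra ℂ (Equiv.Perm (X ⊕ I × ℕ)) |
            ∃ m : ℕ, m < n + k ∧ ∃ r ∈ Gset Ginf m, x = AN I X N m r} := by
  classical
  by_cases hn : n ≤ N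
  swap
  · rw [AN_eq_zero _ _ _ hn, AN_eq_zero _ _ _ (by omega : ¬ n + k ≤ N), zero_mul, sub_zero]
    exact Submodule.zero_mem _
  by_cases hk : k ≤ N
  swap
  · rw [AN_eq_zero N k h hk, AN_eq_zero _ _ _ (by omega : ¬ n + k ≤ N), mul_zero, sub_zero]
    exact Submodule.zero_mem _
  set y : Equiv.Perm (X ⊕ I × ℕ) := g * (embNat I X θ * h * (embNat I X θ)⁻¹) with hy
  set q : Perm (Fin N) → Equiv.Perm (X ⊕ I × ℕ) :=
    fun π => g * (embFin I X N π * h * (embFin I X N π)⁻¹) with hq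
  have claim1 : AN I X N n g * AN I X N k h
      = (((N - n).factorial * (N - k).factorial : ℂ))⁻¹ •
          ∑ π : Perm (Fin N), Sc I X N (q π) := by
    rw [AN_eq _ _ _ hn, AN_eq _ _ _ hk, smul_mul_assoc, mul_smul_comm, smul_smul, ← mul_inv]
    congr 1
    unfold Sc
    rw [Finset.sum_mul_sum]
    have inner : ∀ σ : Perm (Fin N),
        (∑ τ : Perm (Fin N),
          (MonoidAlgebra.of ℂ (Equiv.Perm (X ⊕ I × ℕ)))
              (embFin I X N σ * g * (embFin I X N σ)⁻¹) *
            (MonoidAlgebra.of ℂ (Equiv.Perm (X ⊕ I × ℕ)))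
              (embFin I X N τ * h * (embFin I X N τ)⁻¹))
        = ∑ π : Perm (Fin N),
            (MonoidAlgebra.of ℂ (Equiv.Perm (X ⊕ I × ℕ)))
              (embFin I X N σ * q π * (embFin I X N σ)⁻¹) := by
      intro σ
      rw [← Equiv.sum_comp (Equiv.mulLeft σ)
        (fun τ => (MonoidAlgebra.of ℂ (Equiv.Perm (X ⊕ I × ℕ)))
            (embFin I X N σ * g * (embFin I X N σ)⁻¹) *
          (MonoidAlgebra.of ℂ (Equiv.Perm (X ⊕ I × ℕ)))
            (embFin I X N τ * h * (embFin I X N τ)⁻¹))]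
      apply Finset.sum_congr rfl
      intro π _
      rw [← map_mul]
      congr 1
      show embFin I X N σ * g * (embFin I X N σ)⁻¹ *
          (embFin I X N (σ * π) * h * (embFin I X N (σ * π))⁻¹)
        = embFin I X N σ * (g * (embFin I X N π * h * (embFin I X N π)⁻¹)) *
            (embFin I X N σ)⁻¹
      rw [embFin_mul]
      group
    rw [Finset.sum_congr rfl (fun σ _ => inner σ), Finset.sum_comm]
  set ext : (Fin k ↪ Fin N) → Perm (Fin N) := fun ι => (exists_ext hk ι).choose with hext
  have hextspec : ∀ (ι : Fin k ↪ Fin N) (i : Fin k), (ext ι) (Fin.castLE hk i) = ι i :=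
    fun ι => (exists_ext hk ι).choose_spec
  have claim2 : ∑ π : Perm (Fin N), Sc I X N (q π)
      = ∑ ι : Fin k ↪ Fin N, ((N - k).factorial : ℂ) • Sc I X N (q (ext ι)) := by
    rw [← Finset.sum_fiberwise Finset.univ (resEmb hk) (fun π => Sc I X N (q π))]
    apply Finset.sum_congr rfl
    intro ι _
    have hterm : ∀ π ∈ Finset.univ.filter (fun π => resEmb hk π = ι),
        Sc I X N (q π) = Sc I X N (q (ext ι)) := by
      intro π hπ
      rw [Finset.mem_filter] at hπ
      have hagree : ∀ i : Fin k, π (Fin.castLE hk i) = (ext ι) (Fin.castLE hk i) := by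
        intro i
        rw [hextspec ι i]
        exact DFunLike.congr_fun hπ.2 i
      have heq := q_eq hk h hh.2 π (ext ι) hagree
      simp only [hq]
      rw [heq]
    rw [Finset.sum_congr rfl hterm, Finset.sum_const, card_fiber hk ι,
      ← Nat.cast_smul_eq_nsmul ℂ]
  have claim3 : AN I X N n g * AN I X N k h
      = ((N - n).factorial : ℂ)⁻¹ • ∑ ι : Fin k ↪ Fin N, Sc I X N (q (ext ι)) := by
    rw [claim1, claim2, ← Finset.smul_sum, smul_smul]
    congr 1
    rw [mul_inv, mul_assoc,
      inv_mul_cancel₀ (by exact_mod_cast Nat.factorial_ne_zero (N - k) :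
        ((N - k).factorial : ℂ) ≠ 0), mul_one]
  have hsplit : ∑ ι : Fin k ↪ Fin N, Sc I X N (q (ext ι))
      = (∑ ι ∈ Finset.univ.filter (fun ι : Fin k ↪ Fin N => ∀ i, n ≤ (ι i).val), Sc I X N (q (ext ι)))
        + ∑ ι ∈ Finset.univ.filter (fun ι : Fin k ↪ Fin N => ¬ ∀ i, n ≤ (ι i).val), Sc I X N (q (ext ι)) :=
    (Finset.sum_filter_add_sum_filter_not Finset.univ _ _).symm
  have htopval : ∀ ι ∈ Finset.univ.filter (fun ι : Fin k ↪ Fin N => ∀ i, n ≤ (ι i).val), Sc I X N (q (ext ι)) = Sc I X N y := by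
    intro ι hι
    rw [Finset.mem_filter] at hι
    have hι2 : ∀ i, n ≤ (ι i).val := hι.2
    have hnk : n + k ≤ N := by
      let hemb : Fin k ↪ {a : Fin N // n ≤ a.val} :=
        ⟨fun i => ⟨ι i, hι2 i⟩, fun a b hab => ι.injective (congrArg Subtype.val hab)⟩
      have hcard := Fintype.card_le_of_embedding hemb
      rw [Fintype.card_fin, card_subtype_ge] at hcard
      omega
    obtain ⟨μ, hμlow, hμfix, hμmap⟩ := exists_natPerm (n := n) (N := N)
      (fun i : Fin k => (ι i).val) (fun i : Fin k => n + i.val)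
      (fun a b hab => ι.injective (Fin.ext hab))
      (fun a b hab => Fin.ext (by
        have h9 : n + (a : ℕ) = n + (b : ℕ) := hab
        omega))
      (fun i => ⟨hι2 i, (ι i).isLt⟩)
      (fun i => ⟨by show n ≤ n + (i : ℕ); omega,
        by show n + (i : ℕ) < N; have := i.isLt; omega⟩)
    have hkey : embNat I X μ * q (ext ι) * (embNat I X μ)⁻¹ = y := by
      have hgconj : embNat I X μ * g * (embNat I X μ)⁻¹ = g := conj_fix hg.2 hμlow
      set ρ : Perm ℕ := μ * ((ext ι).extendDomain Fin.equivSubtype) with hρ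
      have hhconj : embNat I X ρ * h * (embNat I X ρ)⁻¹
          = embNat I X θ * h * (embNat I X θ)⁻¹ := by
        apply conj_congr
        have hfix : ∀ j, j < k → (θ⁻¹ * ρ) j = j := by
          intro j hj
          have hjN : j < N := lt_of_lt_of_le hj hk
          show θ⁻¹ (μ (((ext ι).extendDomain Fin.equivSubtype) j)) = j
          rw [extendFin_lt _ j hjN]
          have hπ₀j : (ext ι) ⟨j, hjN⟩ = ι ⟨j, hj⟩ := hextspec ι ⟨j, hj⟩
          rw [hπ₀j, hμmap ⟨j, hj⟩, ← hθ j hj, perm_inv_apply_self]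
        have hc := conj_fix hh.2 hfix
        rw [embNat_mul, embNat_inv] at hc
        exact hc
      have hsplit2 : embNat I X μ * embFin I X N (ext ι) = embNat I X ρ := by
        rw [hρ, embNat_mul]; rfl
      show embNat I X μ *
          (g * (embFin I X N (ext ι) * h * (embFin I X N (ext ι))⁻¹)) *
          (embNat I X μ)⁻¹ = y
      calc embNat I X μ *
            (g * (embFin I X N (ext ι) * h * (embFin I X N (ext ι))⁻¹)) *
            (embNat I X μ)⁻¹
          = (embNat I X μ * g * (embNat I X μ)⁻¹) *
            ((embNat I X μ * embFin I X N (ext ι)) * h *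
              (embNat I X μ * embFin I X N (ext ι))⁻¹) := by group
        _ = g * (embNat I X ρ * h * (embNat I X ρ)⁻¹) := by rw [hgconj, hsplit2]
        _ = y := by rw [hhconj]
    rw [← hkey, Sc_conj_nat _ _ _ hμfix]
  have hTop : ((N - n).factorial : ℂ)⁻¹ • ∑ ι ∈ Finset.univ.filter (fun ι : Fin k ↪ Fin N => ∀ i, n ≤ (ι i).val), Sc I X N (q (ext ι))
      = AN I X N (n + k) y := by
    rw [Finset.sum_congr rfl htopval, Finset.sum_const]
    have hcardtop : (Finset.univ.filter (fun ι : Fin k ↪ Fin N => ∀ i, n ≤ (ι i).val)).card = (N - n).descFactorial k :=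
      card_top n k N
    rw [hcardtop, ← Nat.cast_smul_eq_nsmul ℂ, smul_smul]
    by_cases hnk : n + k ≤ N
    · rw [AN_eq _ _ _ hnk]
      congr 1
      have hfac : (N - (n + k)).factorial * (N - n).descFactorial k = (N - n).factorial := by
        have h5 := Nat.factorial_mul_descFactorial (show k ≤ N - n by omega)
        rwa [Nat.sub_sub] at h5
      have h1 : ((N - n).factorial : ℂ) ≠ 0 := by
        exact_mod_cast Nat.factorial_ne_zero _
      have h2 : ((N - (n + k)).factorial : ℂ) ≠ 0 := by
        exact_mod_cast Nat.factorial_ne_zero _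
      have hcast : ((N - n).factorial : ℂ)
          = ((N - (n + k)).factorial : ℂ) * ((N - n).descFactorial k : ℂ) := by
        exact_mod_cast hfac.symm
      have hdf : ((N - n).descFactorial k : ℂ) ≠ 0 := by
        have h8 : (N - n).descFactorial k ≠ 0 := by
          rw [Ne, Nat.descFactorial_eq_zero_iff_lt]
          omega
        exact_mod_cast h8
      rw [hcast, mul_inv, mul_assoc, inv_mul_cancel₀ hdf, mul_one]
    · rw [AN_eq_zero _ _ _ hnk]
      have hzero : (N - n).descFactorial k = 0 := Nat.descFactorial_of_lt (by omega)
      rw [hzero]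
      simp
  have hrest : ∀ ι ∈ Finset.univ.filter (fun ι : Fin k ↪ Fin N => ¬ ∀ i, n ≤ (ι i).val),
      Sc I X N (q (ext ι)) ∈ Submodule.span ℂ
        {x : MonoidAlgebra ℂ (Equiv.Perm (X ⊕ I × ℕ)) |
          ∃ m : ℕ, m < n + k ∧ ∃ r ∈ Gset Ginf m, x = AN I X N m r} := by
    intro ι hι
    rw [Finset.mem_filter] at hι
    have hι2 : ∃ i, (ι i).val < n := by
      by_contra hc
      push_neg at hc
      exact hι.2 (fun i => hc i)
    obtain ⟨i₀, hi₀⟩ := hι2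
    set D : Finset (Fin N) := (Finset.univ.image (fun i => ι i)).filter
      (fun a : Fin N => n ≤ a.val) with hD
    set d : ℕ := D.card with hd
    have hdk : d < k := by
      have himg : (Finset.univ.image (fun i => ι i)).card = k := by
        rw [Finset.card_image_of_injective _ ι.injective, Finset.card_univ, Fintype.card_fin]
      have hss : D ⊂ Finset.univ.image (fun i => ι i) := by
        rw [hD, Finset.ssubset_iff_of_subset (Finset.filter_subset _ _)]
        refine ⟨ι i₀, Finset.mem_image_of_mem _ (Finset.mem_univ i₀), ?_⟩
        rw [Finset.mem_filter]
        push_neg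
        intro _
        omega
      have := Finset.card_lt_card hss
      omega
    have hdN : n + d ≤ N := by
      have hsub : D ⊆ Finset.univ.filter (fun a : Fin N => n ≤ a.val) := by
        rw [hD]
        exact Finset.filter_subset_filter _ (Finset.subset_univ _)
      have hcardle := Finset.card_le_card hsub
      have h2 : (Finset.univ.filter (fun a : Fin N => n ≤ a.val)).card = N - n := by
        rw [← Fintype.card_subtype, card_subtype_ge]
      omega
    set eD : {x // x ∈ D} ≃ Fin d := D.equivFin with heD
    have huinj : Function.Injective (fun j : Fin d => ((eD.symm j : {x // x ∈ D}) : Fin N).val) := by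
      intro a b hab
      apply eD.symm.injective
      apply Subtype.ext
      exact Fin.ext hab
    obtain ⟨μ, hμlow, hμfix, hμmap⟩ := exists_natPerm (n := n) (N := N)
      (fun j : Fin d => ((eD.symm j : {x // x ∈ D}) : Fin N).val)
      (fun j : Fin d => n + j.val)
      huinj
      (fun a b hab => Fin.ext (by
        have h9 : n + (a : ℕ) = n + (b : ℕ) := hab
        omega))
      (fun j => by
        have hmem := Finset.mem_filter.mp ((eD.symm j).2)
        exact ⟨hmem.2, ((eD.symm j : {x // x ∈ D}) : Fin N).isLt⟩)
      (fun j => ⟨by show n ≤ n + (j : ℕ); omega,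
        by show n + (j : ℕ) < N; have := j.isLt; omega⟩)
    have hμD : ∀ a : Fin N, a ∈ D → μ a.val < n + d := by
      intro a ha
      have hval : ((eD.symm (eD ⟨a, ha⟩) : {x // x ∈ D}) : Fin N).val = a.val := by
        rw [Equiv.symm_apply_apply]
      have := hμmap (eD ⟨a, ha⟩)
      rw [hval] at this
      rw [this]
      have := (eD ⟨a, ha⟩).isLt
      omega
    set ρ : Perm ℕ := μ * ((ext ι).extendDomain Fin.equivSubtype) with hρ
    have hρfixN : fixesFrom N ρ := by
      intro m hm
      show μ (((ext ι).extendDomain Fin.equivSubtype) m) = m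
      rw [extendFin_ge _ m (by omega), hμfix m hm]
    have hρlt : ∀ j, j < k → ρ j < n + d := by
      intro j hj
      have hjN : j < N := lt_of_lt_of_le hj hk
      show μ (((ext ι).extendDomain Fin.equivSubtype) j) < n + d
      rw [extendFin_lt _ j hjN]
      have hπ₀j : (ext ι) ⟨j, hjN⟩ = ι ⟨j, hj⟩ := hextspec ι ⟨j, hj⟩
      rw [hπ₀j]
      rcases lt_or_ge ((ι ⟨j, hj⟩ : Fin N)).val n with hc | hc
      · rw [hμlow _ hc]; omega
      · have hmem : ι ⟨j, hj⟩ ∈ D := by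
          rw [hD, Finset.mem_filter]
          exact ⟨Finset.mem_image_of_mem _ (Finset.mem_univ (⟨j, hj⟩ : Fin k)), hc⟩
        exact hμD _ hmem
    set r : Equiv.Perm (X ⊕ I × ℕ) := g * (embNat I X ρ * h * (embNat I X ρ)⁻¹) with hr
    have hrG : r ∈ Gset Ginf (n + d) := by
      have hρG : embNat I X ρ ∈ Ginf := embNat_mem Ginf hGS hρfixN
      refine ⟨mul_mem hg.1 (mul_mem (mul_mem hρG hh.1) (inv_mem hρG)), ?_⟩
      intro i m hm
      show g ((embNat I X ρ) (h ((embNat I X ρ)⁻¹ (Sum.inr (i, m))))) = Sum.inr (i, m)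
      rw [← embNat_inv, embNat_inr]
      have h1 : k ≤ ρ⁻¹ m := by
        by_contra hc
        push_neg at hc
        have h2 := hρlt _ hc
        rw [perm_apply_inv_self] at h2
        omega
      rw [hh.2 i _ h1, embNat_inr, perm_apply_inv_self, hg.2 i m (by omega)]
    have hgconj : embNat I X μ * g * (embNat I X μ)⁻¹ = g := conj_fix hg.2 hμlow
    have hsplit2 : embNat I X μ * embFin I X N (ext ι) = embNat I X ρ := by
      rw [hρ, embNat_mul]; rfl
    have hkey : embNat I X μ * q (ext ι) * (embNat I X μ)⁻¹ = r := by
      show embNat I X μ *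
          (g * (embFin I X N (ext ι) * h * (embFin I X N (ext ι))⁻¹)) *
          (embNat I X μ)⁻¹ = r
      calc embNat I X μ *
            (g * (embFin I X N (ext ι) * h * (embFin I X N (ext ι))⁻¹)) *
            (embNat I X μ)⁻¹
          = (embNat I X μ * g * (embNat I X μ)⁻¹) *
            ((embNat I X μ * embFin I X N (ext ι)) * h *
              (embNat I X μ * embFin I X N (ext ι))⁻¹) := by group
        _ = g * (embNat I X ρ * h * (embNat I X ρ)⁻¹) := by rw [hgconj, hsplit2]
        _ = r := by rw [hr]
    have hSc : Sc I X N (q (ext ι)) = Sc I X N r := by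
      rw [← hkey, Sc_conj_nat _ _ _ hμfix]
    rw [hSc, Sc_eq_smul_AN N (n + d) r (by omega)]
    exact Submodule.smul_mem _ _
      (Submodule.subset_span ⟨n + d, by omega, r, hrG, rfl⟩)
  rw [claim3, hsplit, smul_add, hTop, add_sub_cancel_left]
  exact Submodule.smul_mem _ _ (Submodule.sum_mem _ hrest)

end MainB


/-- Let `g ∈ G_n`, `h ∈ G_k`, and let `θ ∈ K_{n+k}` be any element whose underlying
permutation of `ℕ` sends `i` to `n + i` for all `0 ≤ i < k`.  Then
(a) `g · θ h θ⁻¹ ∈ G_{n+k}` and its `K_{n+k}`-conjugacy class does not depend on the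
choice of `θ`; and
(b) for every `N`, the difference `A_N[n,g] * A_N[k,h] − A_N[n+k, g · θ h θ⁻¹]` lies in
the complex linear span of the elements `A_N[m,r]` with `m ≤ n + k − 1` (i.e. `m < n+k`)
and `r ∈ G_m`. -/
theorem AN_mul_AN_sub_top_term_mem_span
    {I X : Type*} [Finite I] [Countable X]
    (Ginf : Subgroup (Equiv.Perm (X ⊕ I × ℕ)))
    (hGfs : ∀ g ∈ Ginf, {v : X ⊕ I × ℕ | g v ≠ v}.Finite)
    (hGS : ∀ τ : Equiv.Perm ℕ, {m : ℕ | τ m ≠ m}.Finite → embNat I X τ ∈ Ginf)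
    (n k : ℕ) (g h : Equiv.Perm (X ⊕ I × ℕ))
    (hg : g ∈ Gset Ginf n) (hh : h ∈ Gset Ginf k) :
    (∀ θ θ' : Equiv.Perm ℕ,
      fixesFrom (n + k) θ → fixesFrom (n + k) θ' →
      (∀ i : ℕ, i < k → θ i = n + i) → (∀ i : ℕ, i < k → θ' i = n + i) →
      g * (embNat I X θ * h * (embNat I X θ)⁻¹) ∈ Gset Ginf (n + k) ∧
      Kconj (n + k)
        (g * (embNat I X θ * h * (embNat I X θ)⁻¹))
        (g * (embNat I X θ' * h * (embNat I X θ')⁻¹)))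
    ∧
    (∀ (N : ℕ) (θ : Equiv.Perm ℕ),
      fixesFrom (n + k) θ → (∀ i : ℕ, i < k → θ i = n + i) →
      AN I X N n g * AN I X N k h
          - AN I X N (n + k) (g * (embNat I X θ * h * (embNat I X θ)⁻¹))
        ∈ Submodule.span ℂ
            {x : MonoidAlgebra ℂ (Equiv.Perm (X ⊕ I × ℕ)) |
              ∃ m : ℕ, m < n + k ∧ ∃ r ∈ Gset Ginf m, x = AN I X N m r}) := by
  constructor
  · intro θ θ' hθf hθ'f hθ hθ'
    refine ⟨partA_mem Ginf hGS n k g h hg hh θ hθf hθ, 1, fun m _ => rfl, ?_⟩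
    rw [embNat_one, one_mul, inv_one, mul_one,
      theta_indep n h hh.2 θ' θ hθ' hθ]
  · intro N θ hθf hθ
    exact partB Ginf hGS n k g h hg hh N θ hθf hθ

end
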